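/- Density-ratio/IPW identity: Let V be a random vector and R = (R_1, ..., R_k) a vector of binary missingness indicators such that for each i, R_i ⫫ (V, R_{-i}) | Pa_i where Pa_i is a measurable function of V, and P(R = 0 | V) = ∏_i P(R_i = 0 | Pa_i) > 0 a.s. Then the law of V satisfies dP_V / dP_{V | R=0}(v) = P(R = 0) / ∏_i P(R_i = 0 | Pa_i = pa_i(v)) wherever defined; equivalently P(V ∈ A) = E[1_{V ∈ A} 1_{R=0}] / ∏_i P(R_i = 0 | Pa_i). -/

import Mathlib

open MeasureTheory ProbabilityTheory
open scoped ENNReal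

lemma ipw_aux {Ω : Type*} {m : MeasurableSpace Ω} [mΩ : MeasurableSpace Ω] [StandardBorelSpace Ω] [Nonempty Ω]
    (μ : Measure Ω) [IsProbabilityMeasure μ] (hm : m ≤ mΩ)
    {S : Set Ω} (hS : MeasurableSet S) {g : Ω → ℝ≥0∞} (hg : Measurable[m] g) :
    ∫⁻ ω, g ω * condExpKernel μ m ω S ∂μ = ∫⁻ ω, g ω * S.indicator 1 ω ∂μ := by
  set κS : Ω → ℝ≥0∞ := fun ω => condExpKernel μ m ω S with hκS
  have hκm : Measurable[m] κS := measurable_condExpKernel hS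
  have hκ : Measurable κS := hκm.mono hm le_rfl
  have hg' : Measurable g := hg.mono hm le_rfl
  have h1 : ∫⁻ ω, g ω * κS ω ∂μ = ∫⁻ ω, g ω ∂(μ.withDensity κS) := by
    rw [lintegral_withDensity_eq_lintegral_mul μ hκ hg']
    simp [mul_comm]
  have h2 : ∫⁻ ω, g ω * S.indicator 1 ω ∂μ = ∫⁻ ω, g ω ∂(μ.restrict S) := by
    rw [← withDensity_indicator_one hS,
      lintegral_withDensity_eq_lintegral_mul μ (measurable_one.indicator hS) hg']
    simp [mul_comm]
  haveI : SigmaFinite (μ.trim hm) := by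
    have : IsFiniteMeasure (μ.trim hm) := isFiniteMeasure_trim hm
    infer_instance
  have key : ∀ t : Set Ω, MeasurableSet[m] t →
      (μ.withDensity κS) t = (μ.restrict S) t := by
    intro t ht
    have ht' : MeasurableSet t := hm _ ht
    rw [withDensity_apply _ ht', Measure.restrict_apply ht']
    have hce := condExpKernel_ae_eq_condExp (μ := μ) hm hS
    have hreal : ∫ x in t, (κS x).toReal ∂μ = (∫⁻ x in t, κS x ∂μ).toReal :=
      integral_toReal hκ.aemeasurable.restrict
        (Filter.Eventually.of_forall fun x => lt_of_le_of_lt prob_le_one ENNReal.one_lt_top)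
    have hstep1 : ∫ x in t, (κS x).toReal ∂μ = ∫ x in t, (μ⟦S|m⟧) x ∂μ :=
      setIntegral_congr_ae ht' (hce.mono fun x hx _ => hx)
    have hstep2 : ∫ x in t, (μ⟦S|m⟧) x ∂μ = ∫ x in t, S.indicator (fun _ => (1:ℝ)) x ∂μ :=
      setIntegral_condExp hm ((integrable_const (1:ℝ)).indicator hS) ht
    have hstep3 : ∫ x in t, S.indicator (fun _ => (1:ℝ)) x ∂μ = (μ (t ∩ S)).toReal := by
      rw [setIntegral_indicator hS, setIntegral_const, smul_eq_mul, mul_one, measureReal_def]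
    have hfin1 : ∫⁻ x in t, κS x ∂μ ≠ ∞ :=
      ((lintegral_mono fun x => prob_le_one).trans_lt
        (by simpa using measure_lt_top (μ.restrict t) univ)).ne
    have : (∫⁻ x in t, κS x ∂μ).toReal = (μ (t ∩ S)).toReal := by
      rw [← hreal, hstep1, hstep2, hstep3]
    exact (ENNReal.toReal_eq_toReal_iff' hfin1 (measure_ne_top _ _)).mp this
  rw [h1, h2, ← lintegral_trim hm hg, ← lintegral_trim hm hg]
  congr 1
  exact @Measure.ext _ m _ _ fun t ht => by
    rw [trim_measurableSet_eq hm ht, trim_measurableSet_eq hm ht, key t ht]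


/-- density-ratio/IPW identity, Equation 4: let `V` be a random vector
and `R i` (`i : Fin k`) binary missingness indicators such that each `R i` is
conditionally independent of `(V, R_{-i})` given its parents `Pa i = pa i ∘ V`, and
`P(R = 0 | V) = ∏ i, P(R i = 0 | Pa i) > 0` a.s. Then the law of `V` is recovered by
inverse-probability weighting of the fully observed records:
`P(V ∈ A) = E[ 1_{V ∈ A} 1_{R = 0} / ∏ i, P(R i = 0 | Pa i) ]`. -/
theorem ipw_recoverability
    {Ω : Type*} [MeasurableSpace Ω] [StandardBorelSpace Ω] [Nonempty Ω]
    (μ : Measure Ω) [IsProbabilityMeasure μ]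
    {𝓥 βP : Type*} [MeasurableSpace 𝓥] [MeasurableSpace βP]
    (k : ℕ) (V : Ω → 𝓥) (R : Fin k → Ω → Bool) (pa : Fin k → 𝓥 → βP)
    (hV : Measurable V) (hR : ∀ i, Measurable (R i)) (hpa : ∀ i, Measurable (pa i))
    -- each `R i` is conditionally independent of `(V, R_{-i})` given `Pa i`
    (hCI : ∀ i : Fin k,
      CondIndepFun (MeasurableSpace.comap (fun ω => pa i (V ω)) inferInstance)
        (((hpa i).comp hV).comap_le) (R i)
        (fun ω => (V ω, fun j : {j : Fin k // j ≠ i} => R (j : Fin k) ω)) μ)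
    -- the missingness probability factorizes and is a.s. positive
    (hfact : ∀ᵐ ω ∂μ,
      condExpKernel μ (MeasurableSpace.comap V inferInstance) ω
          {ω' | ∀ i, R i ω' = false} =
        ∏ i : Fin k, condExpKernel μ
          (MeasurableSpace.comap (fun ω'' => pa i (V ω'')) inferInstance) ω
          {ω' | R i ω' = false} ∧
      ∀ i : Fin k, 0 < condExpKernel μ
        (MeasurableSpace.comap (fun ω'' => pa i (V ω'')) inferInstance) ω
        {ω' | R i ω' = false}) :
    ∀ A : Set 𝓥, MeasurableSet A →
      μ (V ⁻¹' A) =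
        ∫⁻ ω, ((V ⁻¹' A ∩ {ω' | ∀ i, R i ω' = false}).indicator
            (fun _ => (1 : ℝ≥0∞)) ω) /
          (∏ i : Fin k, condExpKernel μ
            (MeasurableSpace.comap (fun ω'' => pa i (V ω'')) inferInstance) ω
            {ω' | R i ω' = false}) ∂μ := by
  intro A hA
  classical
  have hm : MeasurableSpace.comap V inferInstance ≤ ‹MeasurableSpace Ω› :=
    hV.comap_le
  have hmi : ∀ i : Fin k,
      MeasurableSpace.comap (fun ω'' => pa i (V ω'')) inferInstance ≤
        MeasurableSpace.comap V inferInstance := by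
    intro i s hs
    obtain ⟨t, ht, rfl⟩ := hs
    exact ⟨pa i ⁻¹' t, hpa i ht, rfl⟩
  set S : Set Ω := {ω' | ∀ i, R i ω' = false} with hS_def
  have hS : MeasurableSet S := by
    have : S = ⋂ i, R i ⁻¹' {false} := by
      ext ω; simp [hS_def]
    rw [this]
    exact MeasurableSet.iInter fun i => (hR i) (measurableSet_singleton false)
  have hSi : ∀ i : Fin k, MeasurableSet {ω' | R i ω' = false} :=
    fun i => (hR i) (measurableSet_singleton false)
  set F : Ω → ℝ≥0∞ := fun ω => ∏ i : Fin k, condExpKernel μ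
      (MeasurableSpace.comap (fun ω'' => pa i (V ω'')) inferInstance) ω
      {ω' | R i ω' = false} with hF_def
  have hF_m : Measurable[MeasurableSpace.comap V inferInstance] F :=
    Finset.measurable_prod _ fun i _ =>
      (measurable_condExpKernel (hSi i)).mono (hmi i) le_rfl
  have hF_ne_top : ∀ ω, F ω ≠ ∞ := fun ω =>
    (ENNReal.prod_lt_top fun i _ => measure_lt_top _ _).ne
  have hVA : MeasurableSet[MeasurableSpace.comap V inferInstance] (V ⁻¹' A) := ⟨A, hA, rfl⟩
  set g : Ω → ℝ≥0∞ := fun ω => (V ⁻¹' A).indicator (fun _ => (1 : ℝ≥0∞)) ω / F ω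
    with hg_def
  have hg : Measurable[MeasurableSpace.comap V inferInstance] g :=
    Measurable.div (measurable_const.indicator hVA) hF_m
  have hsplit : ∀ ω, (V ⁻¹' A ∩ S).indicator (fun _ => (1 : ℝ≥0∞)) ω / F ω
      = g ω * S.indicator 1 ω := by
    intro ω
    by_cases hω : ω ∈ S
    · simp [Set.indicator_apply, hω, hg_def]
    · simp [Set.indicator_apply, hω, ENNReal.zero_div]
  calc μ (V ⁻¹' A) = ∫⁻ ω, (V ⁻¹' A).indicator (fun _ => (1 : ℝ≥0∞)) ω ∂μ := by
        rw [lintegral_indicator (hV hA)]; simp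
    _ = ∫⁻ ω, g ω * condExpKernel μ (MeasurableSpace.comap V inferInstance) ω S ∂μ := by
        refine (lintegral_congr_ae ?_).symm
        filter_upwards [hfact] with ω hω
        have h1 : condExpKernel μ (MeasurableSpace.comap V inferInstance) ω S = F ω := hω.1
        have h0 : F ω ≠ 0 :=
          Finset.prod_ne_zero_iff.mpr fun i _ => (hω.2 i).ne'
        rw [h1, hg_def]
        exact ENNReal.div_mul_cancel h0 (hF_ne_top ω)
    _ = ∫⁻ ω, g ω * S.indicator 1 ω ∂μ := ipw_aux μ hm hS hg
    _ = ∫⁻ ω, (V ⁻¹' A ∩ S).indicator (fun _ => (1 : ℝ≥0∞)) ω / F ω ∂μ :=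
        lintegral_congr fun ω => (hsplit ω).symm
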